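/- Let {φ_k}_{k∈ℕ} be an orthonormal basis of L²([0,1]), let C ≥ 1 and D ≥ 1, and let s_1,…,s_D ∈ L²([0,1]^C). For every ε > 0 there exist K ∈ ℕ, a rank R ≤ K^{C−1}·min{K, D}, factor matrices U^{(1)},…,U^{(C)} ∈ ℝ^{K×R}, and V ∈ ℝ^{D×R}, such that the FUTON function s^futon, defined componentwise by s^futon_d(x) = Σ_{r=1}^R V_{d,r} ∏_{c=1}^C (Σ_{k=0}^{K−1} U^{(c)}_{k,r} φ_k(x_c)) for x ∈ [0,1]^C, satisfies ‖s_d − s^futon_d‖_{L²([0,1]^C)} < ε for every d ∈ {1,…,D}. -/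

import Mathlib

open MeasureTheory Filter Set
open scoped BigOperators ENNReal

namespace Futon

noncomputable section

abbrev m1 : Measure ℝ := volume.restrict (Set.Icc (0:ℝ) 1)
abbrev mP (n : ℕ) : Measure (Fin n → ℝ) := volume.restrict (Set.Icc (0 : Fin n → ℝ) 1)

instance : IsProbabilityMeasure m1 := by
  constructor
  rw [Measure.restrict_apply_univ, Real.volume_Icc]
  norm_num

theorem mP_eq_pi (n : ℕ) : mP n = Measure.pi fun _ : Fin n => m1 := by
  refine (Measure.pi_eq (μ := fun _ : Fin n => m1) fun s hs => ?_).symm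
  rw [mP, ← Set.pi_univ_Icc, Measure.restrict_apply (MeasurableSet.univ_pi hs),
    ← Set.pi_inter_distrib, volume_pi_pi]
  exact Finset.prod_congr rfl fun i _ =>
    (Measure.restrict_apply (hs i)).symm

instance (n : ℕ) : IsProbabilityMeasure (mP n) := by
  rw [mP_eq_pi]; infer_instance

theorem quasiMeasurePreserving_eval (n : ℕ) (c : Fin n) :
    Measure.QuasiMeasurePreserving (Function.eval c)
      (Measure.pi fun _ : Fin n => m1) m1 :=
  ⟨measurable_pi_apply c, Measure.AbsolutelyContinuous.mk fun s hs h0 => by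
    rw [Measure.map_apply (measurable_pi_apply c) hs]
    exact Measure.pi_eval_preimage_null _ h0⟩

theorem tensor_ae_congr {n : ℕ} {f g : Fin n → ℝ → ℝ} (h : ∀ c, f c =ᵐ[m1] g c) :
    (fun x : Fin n → ℝ => ∏ c, f c (x c)) =ᵐ[Measure.pi fun _ : Fin n => m1]
      (fun x => ∏ c, g c (x c)) := by
  have : ∀ᵐ x ∂(Measure.pi fun _ : Fin n => m1), ∀ c, f c (x c) = g c (x c) :=
    (ae_all_iff).2 fun c => (quasiMeasurePreserving_eval n c).ae_eq (h c)
  exact this.mono fun x hx => Finset.prod_congr rfl fun c _ => hx c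

theorem tensor_aestronglyMeasurable {n : ℕ} {f : Fin n → ℝ → ℝ}
    (hf : ∀ c, AEStronglyMeasurable (f c) m1) :
    AEStronglyMeasurable (fun x : Fin n → ℝ => ∏ c, f c (x c))
      (Measure.pi fun _ : Fin n => m1) := by
  have : ∀ c : Fin n, AEStronglyMeasurable (fun x : Fin n → ℝ => f c (x c))
      (Measure.pi fun _ : Fin n => m1) := fun c =>
    (hf c).comp_quasiMeasurePreserving (quasiMeasurePreserving_eval n c)
  exact (Finset.aestronglyMeasurable_prod _ fun c (_ : c ∈ Finset.univ) => this c).congr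
    (Eventually.of_forall fun x => by simp)

theorem lintegral_pi_prod : ∀ (n : ℕ) (g : Fin n → ℝ → ℝ≥0∞), (∀ c, Measurable (g c)) →
    ∫⁻ x, ∏ c, g c (x c) ∂(Measure.pi fun _ : Fin n => m1) = ∏ c, ∫⁻ t, g c t ∂m1 := by
  intro n
  induction n with
  | zero => intro g hg; simp
  | succ n ih =>
    intro g hg
    have hmp := (measurePreserving_piFinSuccAbove (fun _ : Fin (n+1) => m1) 0).symm
    have hmeas : Measurable fun x : Fin (n+1) → ℝ => ∏ c, g c (x c) :=
      Finset.measurable_prod _ fun c _ => (hg c).comp (measurable_pi_apply c)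
    rw [← hmp.lintegral_comp hmeas]
    have : ∀ z : ℝ × (Fin n → ℝ),
        (∏ c, g c (((MeasurableEquiv.piFinSuccAbove (fun _ => ℝ) 0).symm z) c)) =
          g 0 z.1 * ∏ i : Fin n, g i.succ (z.2 i) := by
      intro z
      simp [MeasurableEquiv.piFinSuccAbove_symm_apply, Fin.insertNthEquiv,
        Fin.prod_univ_succ, Fin.insertNth_zero, Fin.zero_succAbove]
    simp_rw [this]
    rw [lintegral_prod_mul (f := fun t => g 0 t) (g := fun y : Fin n → ℝ => ∏ i, g i.succ (y i))
      (hg 0).aemeasurable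
      (Finset.measurable_prod _ fun i _ => (hg i.succ).comp (measurable_pi_apply i)).aemeasurable,
      ih _ fun c => hg c.succ, Fin.prod_univ_succ]

theorem tensor_eLpNorm {n : ℕ} {f : Fin n → ℝ → ℝ}
    (hf : ∀ c, AEStronglyMeasurable (f c) m1) :
    eLpNorm (fun x : Fin n → ℝ => ∏ c, f c (x c)) 2 (Measure.pi fun _ : Fin n => m1)
      = ∏ c, eLpNorm (f c) 2 m1 := by
  set g : Fin n → ℝ → ℝ := fun c => (hf c).mk (f c) with hg
  have hgm : ∀ c, StronglyMeasurable (g c) := fun c => (hf c).stronglyMeasurable_mk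
  have hae : ∀ c, f c =ᵐ[m1] g c := fun c => (hf c).ae_eq_mk
  rw [eLpNorm_congr_ae (tensor_ae_congr hae)]
  have h2 : ∀ c, eLpNorm (f c) 2 m1 = eLpNorm (g c) 2 m1 := fun c =>
    eLpNorm_congr_ae (hae c)
  simp_rw [h2]
  rw [eLpNorm_eq_lintegral_rpow_enorm_toReal (by norm_num) (by norm_num)]; simp only [enorm_eq_nnnorm]
  have key : ∫⁻ x, (‖∏ c, g c (x c)‖₊ : ℝ≥0∞) ^ (2:ℝ≥0∞).toReal
      ∂(Measure.pi fun _ : Fin n => m1)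
      = ∏ c, ∫⁻ t, (‖g c t‖₊ : ℝ≥0∞) ^ (2:ℝ≥0∞).toReal ∂m1 := by
    rw [← lintegral_pi_prod n (fun c t => (‖g c t‖₊ : ℝ≥0∞) ^ (2:ℝ≥0∞).toReal)
      (fun c => ((hgm c).measurable.nnnorm.coe_nnreal_ennreal).pow_const _)]
    refine lintegral_congr fun x => ?_
    rw [nnnorm_prod, ENNReal.coe_finset_prod]
    exact (ENNReal.prod_rpow_of_nonneg (by positivity)).symm
  rw [key]
  have : ∀ c : Fin n, eLpNorm (g c) 2 m1
      = (∫⁻ t, (‖g c t‖₊ : ℝ≥0∞) ^ (2:ℝ≥0∞).toReal ∂m1) ^ (1 / (2:ℝ≥0∞).toReal) := fun c =>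
    eLpNorm_eq_lintegral_rpow_enorm_toReal (by norm_num) (by norm_num)
  simp_rw [this]
  exact (ENNReal.prod_rpow_of_nonneg (by positivity)).symm

theorem tensor_memLp {n : ℕ} {f : Fin n → ℝ → ℝ} (hf : ∀ c, MemLp (f c) 2 m1) :
    MemLp (fun x : Fin n → ℝ => ∏ c, f c (x c)) 2 (Measure.pi fun _ : Fin n => m1) := by
  refine ⟨tensor_aestronglyMeasurable fun c => (hf c).1, ?_⟩
  rw [tensor_eLpNorm fun c => (hf c).1]
  exact ENNReal.prod_lt_top fun c _ => (hf c).2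

theorem memℒp_tensor_mP {n : ℕ} {f : Fin n → ℝ → ℝ} (hf : ∀ c, MemLp (f c) 2 m1) :
    MemLp (fun x : Fin n → ℝ => ∏ c, f c (x c)) 2 (mP n) := by
  rw [mP_eq_pi]; exact tensor_memLp hf

theorem tensor_eLpNorm_mP {n : ℕ} {f : Fin n → ℝ → ℝ}
    (hf : ∀ c, AEStronglyMeasurable (f c) m1) :
    eLpNorm (fun x : Fin n → ℝ => ∏ c, f c (x c)) 2 (mP n) = ∏ c, eLpNorm (f c) 2 m1 := by
  rw [mP_eq_pi]; exact tensor_eLpNorm hf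

/-- coercion of a finite sum of scalar multiples of `toLp`s -/
theorem coeFn_toLp_sum_smul {α : Type*} {mα : MeasurableSpace α} {μ : Measure α}
    {ι : Type*} (s : Finset ι) (b : ι → ℝ) (g : ι → α → ℝ) (hg : ∀ i, MemLp (g i) 2 μ) :
    ⇑(∑ i ∈ s, b i • (hg i).toLp (g i)) =ᵐ[μ] fun x => ∑ i ∈ s, b i * g i x := by
  classical
  induction s using Finset.induction_on with
  | empty => simpa [Pi.zero_def] using Lp.coeFn_zero ℝ 2 μ
  | @insert a s ha ih =>
    rw [Finset.sum_insert ha]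
    have h1 : ⇑(b a • (hg a).toLp (g a)) =ᵐ[μ] fun x => b a * g a x :=
      (Lp.coeFn_smul _ _).trans ((hg a).coeFn_toLp.mono fun x hx => by simp [hx])
    filter_upwards [Lp.coeFn_add (b a • (hg a).toLp (g a)) (∑ i ∈ s, b i • (hg i).toLp (g i)),
      h1, ih] with x hadd hx1 hx2
    rw [Finset.sum_insert ha, hadd, Pi.add_apply, hx1, hx2]

variable (φ : ℕ → ℝ → ℝ) (hmem : ∀ k : ℕ, MemLp (φ k) 2 m1)

/-- span of tensor products of basis functions -/
def SP (n : ℕ) : Submodule ℝ (Lp ℝ 2 (mP n)) :=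
  Submodule.span ℝ (Set.range fun k : Fin n → ℕ =>
    MemLp.toLp _ (memℒp_tensor_mP (f := fun c => φ (k c)) (fun c => hmem (k c))))

set_option maxHeartbeats 1000000 in
theorem tensor_toLp_mem_closure
    (hdense : Dense
      ((Submodule.span ℝ (Set.range fun k : ℕ => (hmem k).toLp (φ k)) :
        Submodule ℝ (Lp ℝ 2 m1)) : Set (Lp ℝ 2 m1)))
    {n : ℕ} (f : Fin n → ℝ → ℝ) (hf : ∀ c, MemLp (f c) 2 m1) :
    MemLp.toLp _ (memℒp_tensor_mP hf) ∈ closure (SP φ hmem n : Set (Lp ℝ 2 (mP n))) := by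
  classical
  suffices H : ∀ (F : Finset (Fin n)) (f : Fin n → ℝ → ℝ) (hf : ∀ c, MemLp (f c) 2 m1),
      (∀ c ∉ F, ∃ (K : ℕ) (b : Fin K → ℝ), f c = fun t => ∑ k, b k * φ (k : ℕ) t) →
      MemLp.toLp _ (memℒp_tensor_mP hf) ∈ closure (SP φ hmem n : Set (Lp ℝ 2 (mP n))) by
    refine H Finset.univ f hf fun c hc => absurd (Finset.mem_univ c) hc
  intro F
  induction F using Finset.induction_on with
  | empty =>
    intro f hf hsp
    choose K b hfb using fun c => hsp c (Finset.notMem_empty c)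
    refine subset_closure ?_
    have key : (fun x : Fin n → ℝ => ∏ c, f c (x c)) = fun x =>
        ∑ κ ∈ Fintype.piFinset (fun c : Fin n => (Finset.univ : Finset (Fin (K c)))),
          (∏ c, b c (κ c)) * ∏ c, φ ((κ c : ℕ)) (x c) := by
      funext x
      have : ∀ c : Fin n, f c (x c) = ∑ k : Fin (K c), b c k * φ (k : ℕ) (x c) := fun c => by
        rw [hfb c]
      simp_rw [this]
      rw [Finset.prod_univ_sum]
      exact Finset.sum_congr rfl fun κ _ => by rw [Finset.prod_mul_distrib]
    have hmemk : ∀ κ : (c : Fin n) → Fin (K c), MemLp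
        (fun x : Fin n → ℝ => ∏ c, φ ((κ c : ℕ)) (x c)) 2 (mP n) :=
      fun κ => memℒp_tensor_mP fun c => hmem _
    have : MemLp.toLp _ (memℒp_tensor_mP hf) =
        ∑ κ ∈ Fintype.piFinset (fun c : Fin n => (Finset.univ : Finset (Fin (K c)))),
          (∏ c, b c (κ c)) • MemLp.toLp _ (hmemk κ) := by
      refine Lp.ext ?_
      refine (MemLp.coeFn_toLp _).trans ?_
      refine ((coeFn_toLp_sum_smul _ _ _ hmemk).trans ?_).symm
      exact Eventually.of_forall fun x => by rw [key]
    rw [this]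
    refine Submodule.sum_mem _ fun κ _ => Submodule.smul_mem _ _ ?_
    exact Submodule.subset_span ⟨fun c => (κ c : ℕ), rfl⟩
  | @insert c₀ F hc₀ ih =>
    intro f hf hsp
    have hmain : ∀ ε : ℝ, 0 < ε → ∃ y ∈ closure (SP φ hmem n : Set (Lp ℝ 2 (mP n))),
        dist (MemLp.toLp _ (memℒp_tensor_mP hf)) y < ε := by
      intro ε hε
      set B : ℝ := ∏ c ∈ Finset.univ.erase c₀, (eLpNorm (f c) 2 m1).toReal with hB
      have hB0 : 0 ≤ B := Finset.prod_nonneg fun c _ => ENNReal.toReal_nonneg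
      set δ : ℝ := ε / (B + 1) with hδ
      have hδ0 : 0 < δ := div_pos hε (by linarith)
      -- approximate f c₀ by an element of the span of the φ's
      obtain ⟨y, hy, hydist⟩ := Metric.mem_closure_iff.1 (hdense ((hf c₀).toLp (f c₀))) δ hδ0
      obtain ⟨a, ha⟩ := (Finsupp.mem_span_range_iff_exists_finsupp).1 hy
      set K : ℕ := (a.support.sup id) + 1 with hK
      set gfun : ℝ → ℝ := fun t => ∑ k : Fin K, a (k : ℕ) * φ (k : ℕ) t with hgfun
      have hgmem : MemLp gfun 2 m1 :=
        memLp_finsetSum Finset.univ fun k _ => ((hmem (k : ℕ)).const_mul _)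
      have hgy : MemLp.toLp gfun hgmem = y := by
        have h1 : ⇑y =ᵐ[m1] fun t => ∑ i ∈ a.support, a i * φ i t := by
          rw [← ha, Finsupp.sum]
          exact coeFn_toLp_sum_smul _ _ _ hmem
        have hpt : gfun = fun t => ∑ i ∈ a.support, a i * φ i t := by
          funext t
          simp only [hgfun]
          rw [Fin.sum_univ_eq_sum_range (fun i => a i * φ i t) K]
          refine (Finset.sum_subset ?_ ?_).symm
          · intro i hi
            refine Finset.mem_range.2 ?_
            have := Finset.le_sup (f := id) hi
            simp only [id] at this
            omega
          · intro i _ hi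
            rw [Finsupp.notMem_support_iff.1 hi, zero_mul]
        refine Lp.ext ((MemLp.coeFn_toLp _).trans ?_)
        rw [hpt]
        exact h1.symm
      set f' : Fin n → ℝ → ℝ := Function.update f c₀ gfun with hf'
      have hf'm : ∀ c, MemLp (f' c) 2 m1 := by
        intro c
        by_cases hc : c = c₀
        · subst hc; rw [hf', Function.update_self]; exact hgmem
        · rw [hf', Function.update_of_ne hc]; exact hf c
      have hspan' : ∀ c ∉ F, ∃ (K : ℕ) (b : Fin K → ℝ),
          f' c = fun t => ∑ k, b k * φ (k : ℕ) t := by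
        intro c hc
        by_cases hce : c = c₀
        · subst hce; exact ⟨K, fun k => a (k : ℕ), by rw [hf', Function.update_self]⟩
        · rw [hf', Function.update_of_ne hce]
          exact hsp c (by simp [Finset.mem_insert, hce, hc])
      refine ⟨MemLp.toLp _ (memℒp_tensor_mP hf'm), ih f' hf'm hspan', ?_⟩
      -- compute the distance
      set h : Fin n → ℝ → ℝ := Function.update f c₀ (f c₀ - gfun) with hh
      have hhm : ∀ c, MemLp (h c) 2 m1 := by
        intro c
        by_cases hc : c = c₀
        · subst hc; rw [hh, Function.update_self]; exact (hf c).sub hgmem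
        · rw [hh, Function.update_of_ne hc]; exact hf c
      have hdiff : (fun x : Fin n → ℝ => ∏ c, f c (x c)) - (fun x => ∏ c, f' c (x c))
          = fun x => ∏ c, h c (x c) := by
        funext x
        simp only [Pi.sub_apply]
        have e0 : ∏ c, h c (x c)
            = (f c₀ (x c₀) - gfun (x c₀)) * ∏ c ∈ Finset.univ.erase c₀, f c (x c) := by
          rw [← Finset.mul_prod_erase Finset.univ (fun c => h c (x c)) (Finset.mem_univ c₀)]
          congr 1
          · rw [hh, Function.update_self, Pi.sub_apply]
          · exact Finset.prod_congr rfl fun c hc => by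
              rw [hh, Function.update_of_ne (Finset.ne_of_mem_erase hc)]
        have e1 : ∏ c, f c (x c)
            = f c₀ (x c₀) * ∏ c ∈ Finset.univ.erase c₀, f c (x c) :=
          (Finset.mul_prod_erase Finset.univ (fun c => f c (x c)) (Finset.mem_univ c₀)).symm
        have e2 : ∏ c, f' c (x c)
            = gfun (x c₀) * ∏ c ∈ Finset.univ.erase c₀, f c (x c) := by
          rw [← Finset.mul_prod_erase Finset.univ (fun c => f' c (x c)) (Finset.mem_univ c₀)]
          congr 1
          · rw [hf', Function.update_self]
          · exact Finset.prod_congr rfl fun c hc => by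
              rw [hf', Function.update_of_ne (Finset.ne_of_mem_erase hc)]
        rw [e0, e1, e2]
        ring
      rw [dist_eq_norm, ← MemLp.toLp_sub, Lp.norm_toLp, hdiff, tensor_eLpNorm_mP
        (fun c => (hhm c).aestronglyMeasurable),
        ← Finset.mul_prod_erase Finset.univ _ (Finset.mem_univ c₀), ENNReal.toReal_mul]
      have e3 : ∏ c ∈ Finset.univ.erase c₀, eLpNorm (h c) 2 m1
          = ∏ c ∈ Finset.univ.erase c₀, eLpNorm (f c) 2 m1 :=
        Finset.prod_congr rfl fun c hc => by
          rw [hh, Function.update_of_ne (Finset.ne_of_mem_erase hc)]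
      rw [e3, ENNReal.toReal_prod, ← hB]
      have e4 : (eLpNorm (h c₀) 2 m1).toReal < δ := by
        have : h c₀ = f c₀ - gfun := by rw [hh, Function.update_self]
        rw [this, ← Lp.norm_toLp _ ((hf c₀).sub hgmem), MemLp.toLp_sub (hf c₀) hgmem, hgy, ← dist_eq_norm]
        exact hydist
      calc (eLpNorm (h c₀) 2 m1).toReal * B ≤ δ * B :=
            mul_le_mul_of_nonneg_right e4.le hB0
        _ < δ * (B + 1) := by
            have := mul_lt_mul_of_pos_left (lt_add_one B) hδ0
            linarith
        _ = ε := by rw [hδ, div_mul_cancel₀ ε (by linarith : B + 1 ≠ 0)]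
    have : MemLp.toLp _ (memℒp_tensor_mP hf) ∈
        closure (closure (SP φ hmem n : Set (Lp ℝ 2 (mP n)))) := by
      refine Metric.mem_closure_iff.2 fun ε hε => ?_
      obtain ⟨y, hy, hd⟩ := hmain ε hε
      exact ⟨y, hy, hd⟩
    rwa [closure_closure] at this

theorem memℒp_monomial (j : ℕ) : MemLp (fun t : ℝ => t ^ j) 2 m1 := by
  refine ⟨(continuous_pow j).aestronglyMeasurable, ?_⟩
  refine lt_of_le_of_lt (eLpNorm_le_of_ae_bound (C := 1) ?_) ?_
  · filter_upwards [ae_restrict_mem measurableSet_Icc] with t ht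
    rw [Real.norm_eq_abs, abs_pow]
    calc |t| ^ j ≤ 1 ^ j := by
          refine pow_le_pow_left₀ (abs_nonneg t) ?_ j
          exact abs_le.2 ⟨by linarith [ht.1], ht.2⟩
      _ = 1 := one_pow j
  · rw [measure_univ, ENNReal.one_rpow, one_mul]
    exact ENNReal.ofReal_lt_top

theorem SP_dense
    (hdense : Dense
      ((Submodule.span ℝ (Set.range fun k : ℕ => (hmem k).toLp (φ k)) :
        Submodule ℝ (Lp ℝ 2 m1)) : Set (Lp ℝ 2 m1)))
    (n : ℕ) : Dense (SP φ hmem n : Set (Lp ℝ 2 (mP n))) := by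
  classical
  intro g
  have key : g ∈ closure (closure (SP φ hmem n : Set (Lp ℝ 2 (mP n)))) := by
    refine Metric.mem_closure_iff.2 fun ε hε => ?_
    have hg := Lp.memLp g
    obtain ⟨b, hb, hbmem⟩ := hg.exists_boundedContinuous_eLpNorm_sub_le
      (by norm_num : (2:ℝ≥0∞) ≠ ∞) (ε := ENNReal.ofReal (ε/3))
      (ne_of_gt (ENNReal.ofReal_pos.2 (by linarith)))
    -- Stone–Weierstrass on the cube
    haveI : CompactSpace (Set.Icc (0 : Fin n → ℝ) 1) :=
      isCompact_iff_compactSpace.mp isCompact_Icc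
    set coords : Fin n → C(Set.Icc (0 : Fin n → ℝ) 1, ℝ) := fun c =>
      ⟨fun x => (x : Fin n → ℝ) c, (continuous_apply c).comp continuous_subtype_val⟩
      with hcoords
    set A : Subalgebra ℝ C(Set.Icc (0 : Fin n → ℝ) 1, ℝ) :=
      Algebra.adjoin ℝ (Set.range coords) with hA
    have hsep : A.SeparatesPoints := by
      intro x y hxy
      have hne : (x : Fin n → ℝ) ≠ (y : Fin n → ℝ) := fun h => hxy (Subtype.ext h)
      obtain ⟨c, hc⟩ := Function.ne_iff.1 hne
      exact ⟨⇑(coords c), ⟨coords c, Algebra.subset_adjoin ⟨c, rfl⟩, rfl⟩, hc⟩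
    have hAtop : A.topologicalClosure = ⊤ :=
      ContinuousMap.subalgebra_topologicalClosure_eq_top_of_separatesPoints A hsep
    set bX : C(Set.Icc (0 : Fin n → ℝ) 1, ℝ) :=
      ⟨fun x => b (x : Fin n → ℝ), b.continuous.comp continuous_subtype_val⟩ with hbX
    have hbXmem : bX ∈ closure (A : Set C(Set.Icc (0 : Fin n → ℝ) 1, ℝ)) := by
      rw [← Subalgebra.topologicalClosure_coe, hAtop]
      trivial
    obtain ⟨p, hpA, hpdist⟩ := Metric.mem_closure_iff.1 hbXmem (ε/3) (by linarith)
    rw [hA, Algebra.adjoin_range_eq_range_aeval] at hpA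
    obtain ⟨q, hq⟩ := hpA
    set polyfun : (Fin n → ℝ) → ℝ := fun x => MvPolynomial.eval x q with hpolyfun
    have hpt : ∀ x : Set.Icc (0 : Fin n → ℝ) 1, p x = polyfun (x : Fin n → ℝ) := by
      intro x
      have hq' : (MvPolynomial.aeval coords) q = p := hq
      have h1 : p x = (ContinuousMap.evalAlgHom ℝ ℝ x) p := rfl
      rw [h1, ← hq', MvPolynomial.comp_aeval_apply]
      have h2 : (fun c => (ContinuousMap.evalAlgHom ℝ ℝ x) (coords c))
          = fun c => (x : Fin n → ℝ) c := rfl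
      rw [h2]
      rfl
    -- polyfun as a sum of monomial tensors
    have hmono : ∀ m : Fin n →₀ ℕ, MemLp
        (fun x : Fin n → ℝ => ∏ c, (x c) ^ (m c)) 2 (mP n) :=
      fun m => memℒp_tensor_mP fun c => memℒp_monomial (m c)
    have hpoly_eq : polyfun = fun x => ∑ m ∈ q.support,
        MvPolynomial.coeff m q * ∏ c, (x c) ^ (m c) := by
      funext x
      rw [hpolyfun]
      exact MvPolynomial.eval_eq' x q
    have hpolymem : MemLp polyfun 2 (mP n) := by
      rw [hpoly_eq]
      exact memLp_finsetSum _ fun m _ => (hmono m).const_mul _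
    have hpolyclos : MemLp.toLp polyfun hpolymem
        ∈ closure (SP φ hmem n : Set (Lp ℝ 2 (mP n))) := by
      rw [← Submodule.topologicalClosure_coe]
      have heq : MemLp.toLp polyfun hpolymem
          = ∑ m ∈ q.support, MvPolynomial.coeff m q • MemLp.toLp _ (hmono m) := by
        refine Lp.ext ((MemLp.coeFn_toLp _).trans ?_)
        refine ((coeFn_toLp_sum_smul _ _ _ hmono).trans ?_).symm
        exact Eventually.of_forall fun x => by rw [hpoly_eq]
      rw [heq]
      refine Submodule.sum_mem _ fun m _ => Submodule.smul_mem _ _ ?_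
      rw [← SetLike.mem_coe, Submodule.topologicalClosure_coe]
      exact tensor_toLp_mem_closure φ hmem hdense (fun c t => t ^ (m c))
        (fun c => memℒp_monomial (m c))
    refine ⟨MemLp.toLp polyfun hpolymem, hpolyclos, ?_⟩
    -- distance estimate
    have d1 : dist g (MemLp.toLp (⇑b) hbmem) ≤ ε/3 := by
      rw [Lp.dist_def]
      have : eLpNorm (⇑g - ⇑(MemLp.toLp (⇑b) hbmem)) 2 (mP n)
          = eLpNorm (⇑g - ⇑b) 2 (mP n) := by
        refine eLpNorm_congr_ae ?_
        filter_upwards [MemLp.coeFn_toLp hbmem] with x hx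
        simp [hx]
      rw [this]
      calc (eLpNorm (⇑g - ⇑b) 2 (mP n)).toReal
          ≤ (ENNReal.ofReal (ε/3)).toReal := by
            refine ENNReal.toReal_mono ENNReal.ofReal_ne_top ?_
            exact hb
        _ = ε/3 := ENNReal.toReal_ofReal (by linarith)
    have d2 : dist (MemLp.toLp (⇑b) hbmem) (MemLp.toLp polyfun hpolymem) ≤ ε/3 := by
      rw [dist_eq_norm, ← MemLp.toLp_sub, Lp.norm_toLp]
      have hbound : ∀ᵐ x ∂(mP n), ‖(⇑b - polyfun) x‖ ≤ ε/3 := by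
        filter_upwards [ae_restrict_mem measurableSet_Icc] with x hx
        have := hpt ⟨x, hx⟩
        have hd := ContinuousMap.dist_apply_le_dist (f := bX) (g := p) (⟨x, hx⟩ : Set.Icc (0 : Fin n → ℝ) 1)
        rw [Real.dist_eq] at hd
        have : |b x - polyfun x| ≤ dist bX p := by
          rw [← this]
          exact hd
        rw [Pi.sub_apply, Real.norm_eq_abs]
        linarith [hpdist, this]
      calc (eLpNorm (⇑b - polyfun) 2 (mP n)).toReal
          ≤ ((mP n) Set.univ ^ (2:ℝ≥0∞).toReal⁻¹ * ENNReal.ofReal (ε/3)).toReal := by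
            refine ENNReal.toReal_mono ?_ (eLpNorm_le_of_ae_bound hbound)
            rw [measure_univ, ENNReal.one_rpow, one_mul]
            exact ENNReal.ofReal_ne_top
        _ = ε/3 := by
            rw [measure_univ, ENNReal.one_rpow, one_mul, ENNReal.toReal_ofReal (by linarith)]
    calc dist g (MemLp.toLp polyfun hpolymem)
        ≤ dist g (MemLp.toLp (⇑b) hbmem) + dist (MemLp.toLp (⇑b) hbmem) (MemLp.toLp polyfun hpolymem) :=
          dist_triangle _ _ _
      _ ≤ ε/3 + ε/3 := add_le_add d1 d2
      _ < ε := by linarith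
  rwa [closure_closure] at key

theorem futon_construct {C' K D : ℕ} (φ : ℕ → ℝ → ℝ)
    (T : Fin D → (Fin (C'+1) → Fin K) → ℝ) :
    ∃ (U : Fin (C'+1) → Fin K → Fin (K ^ C' * D) → ℝ)
      (V : Fin D → Fin (K ^ C' * D) → ℝ),
      ∀ (d : Fin D) (x : Fin (C'+1) → ℝ),
        ∑ r : Fin (K ^ C' * D), V d r * ∏ c, (∑ k : Fin K, U c k r * φ (k : ℕ) (x c))
          = ∑ κ : Fin (C'+1) → Fin K, T d κ * ∏ c, φ ((κ c : ℕ)) (x c) := by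
  classical
  set e : Fin (K ^ C' * D) ≃ (Fin C' → Fin K) × Fin D :=
    finProdFinEquiv.symm.trans
      (Equiv.prodCongr finFunctionFinEquiv.symm (Equiv.refl (Fin D))) with he
  refine ⟨fun c k r => Fin.cases (T (e r).2 (Fin.cons k (e r).1))
      (fun i => if (e r).1 i = k then 1 else 0) c,
    fun d r => if (e r).2 = d then 1 else 0, fun d x => ?_⟩
  -- reindex the sum over r by the equivalence e
  rw [← Equiv.sum_comp e.symm
    (fun r => (if (e r).2 = d then 1 else 0) * ∏ c, (∑ k : Fin K,
      (Fin.cases (T (e r).2 (Fin.cons k (e r).1))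
        (fun i => if (e r).1 i = k then 1 else 0) c : ℝ) * φ (k : ℕ) (x c)))]
  simp only [Equiv.apply_symm_apply]
  rw [Fintype.sum_prod_type]
  -- inner sum over d' collapses
  have hsum1 : ∀ m : Fin C' → Fin K,
      ∑ d' : Fin D, (if d' = d then 1 else 0) * ∏ c, (∑ k : Fin K,
        (Fin.cases (T d' (Fin.cons k m))
          (fun i => if m i = k then 1 else 0) c : ℝ) * φ (k : ℕ) (x c))
      = ∏ c, (∑ k : Fin K, (Fin.cases (T d (Fin.cons k m))
          (fun i => if m i = k then 1 else 0) c : ℝ) * φ (k : ℕ) (x c)) := by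
    intro m
    simp only [ite_mul, one_mul, zero_mul]
    rw [Finset.sum_ite_eq' Finset.univ d]
    simp
  rw [Finset.sum_congr rfl fun m _ => hsum1 m]
  -- expand each product over Fin (C'+1)
  have hprod : ∀ m : Fin C' → Fin K,
      ∏ c, (∑ k : Fin K, (Fin.cases (T d (Fin.cons k m))
          (fun i => if m i = k then 1 else 0) c : ℝ) * φ (k : ℕ) (x c))
      = ∑ k : Fin K, T d (Fin.cons k m) *
          (φ (k : ℕ) (x 0) * ∏ i : Fin C', φ ((m i : ℕ)) (x i.succ)) := by
    intro m
    rw [Fin.prod_univ_succ]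
    simp only [Fin.cases_zero, Fin.cases_succ]
    have h2 : ∀ i : Fin C',
        (∑ k : Fin K, (if m i = k then (1:ℝ) else 0) * φ (k : ℕ) (x i.succ))
          = φ ((m i : ℕ)) (x i.succ) := by
      intro i
      simp only [ite_mul, one_mul, zero_mul]
      rw [Finset.sum_ite_eq Finset.univ (m i)]
      simp
    rw [Finset.prod_congr rfl fun i _ => h2 i, Finset.sum_mul]
    exact Finset.sum_congr rfl fun k _ => by ring
  rw [Finset.sum_congr rfl fun m _ => hprod m]
  -- reindex RHS by Fin.consEquiv
  rw [← Equiv.sum_comp (Fin.consEquiv (fun _ : Fin (C'+1) => Fin K))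
    (fun κ => T d κ * ∏ c, φ ((κ c : ℕ)) (x c))]
  rw [Fintype.sum_prod_type]
  conv_rhs => rw [Finset.sum_comm]
  refine Finset.sum_congr rfl fun m _ => Finset.sum_congr rfl fun k _ => ?_
  simp [Fin.consEquiv, Fin.prod_univ_succ, mul_assoc]

end

end Futon


open MeasureTheory Filter
open scoped BigOperators ENNReal

/-- **Universal Approximation for FUTON.** Let `{φ_k}` be an orthonormal basis of
`L²([0,1])` and `s_1, …, s_D ∈ L²([0,1]^C)`. For every `ε > 0` there exist a
resolution `K`, a rank `R ≤ K^{C−1}·min{K,D}`, factor matrices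
`U^{(c)} ∈ ℝ^{K×R}` and `V ∈ ℝ^{D×R}` such that the FUTON function
`s^futon_d(x) = Σ_r V_{d,r} ∏_c (Σ_k U^{(c)}_{k,r} φ_k(x_c))` satisfies
`‖s_d − s^futon_d‖_{L²([0,1]^C)} < ε` for every `d`. -/
theorem futon_universal_approximation
    (C D : ℕ) (hC : 1 ≤ C) (hD : 1 ≤ D)
    (φ : ℕ → ℝ → ℝ)
    (hmem : ∀ k : ℕ, MemLp (φ k) 2 (volume.restrict (Set.Icc (0 : ℝ) 1)))
    (horth : ∀ k l : ℕ,
      ∫ x in Set.Icc (0 : ℝ) 1, φ k x * φ l x = if k = l then 1 else 0)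
    (hdense : Dense
      ((Submodule.span ℝ (Set.range fun k : ℕ => (hmem k).toLp (φ k)) :
        Submodule ℝ (Lp ℝ 2 (volume.restrict (Set.Icc (0 : ℝ) 1)))) :
        Set (Lp ℝ 2 (volume.restrict (Set.Icc (0 : ℝ) 1)))))
    (s : Fin D → (Fin C → ℝ) → ℝ)
    (hs : ∀ d : Fin D, MemLp (s d) 2 (volume.restrict (Set.Icc (0 : Fin C → ℝ) 1)))
    (ε : ℝ) (hε : 0 < ε) :
    ∃ (K R : ℕ), R ≤ K ^ (C - 1) * min K D ∧
      ∃ (U : Fin C → Fin K → Fin R → ℝ) (V : Fin D → Fin R → ℝ),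
        ∀ d : Fin D,
          eLpNorm (fun x : Fin C → ℝ =>
              s d x - ∑ r : Fin R, V d r * ∏ c : Fin C,
                (∑ k : Fin K, U c k r * φ (↑k) (x c))) 2
            (volume.restrict (Set.Icc (0 : Fin C → ℝ) 1))
          < ENNReal.ofReal ε := by
  classical
  obtain ⟨C', rfl⟩ : ∃ C', C = C' + 1 := ⟨C - 1, (Nat.succ_pred_eq_of_pos hC).symm⟩
  -- approximate each s d by an element of the span of tensor products
  have happrox : ∀ d : Fin D, ∃ y ∈ Futon.SP φ hmem (C' + 1),
      dist (MemLp.toLp (s d) (hs d)) y < ε := by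
    intro d
    have hdns := Futon.SP_dense φ hmem hdense (C' + 1)
    exact Metric.mem_closure_iff.1 (hdns (MemLp.toLp (s d) (hs d))) ε hε
  choose y hySP hydist using happrox
  have hyspan : ∀ d : Fin D, ∃ a : (Fin (C'+1) → ℕ) →₀ ℝ,
      (a.sum fun k r => r • MemLp.toLp _
        (Futon.memℒp_tensor_mP (f := fun c => φ (k c)) (fun c => hmem (k c)))) = y d :=
    fun d => (Finsupp.mem_span_range_iff_exists_finsupp).1 (hySP d)
  choose a ha using hyspan
  -- choose a common resolution K
  set N : ℕ := Finset.univ.sup (fun d : Fin D =>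
    (a d).support.sup (fun k => Finset.univ.sup k)) with hN
  set K : ℕ := max D (N + 1) with hK
  have hKD : D ≤ K := le_max_left _ _
  have hbound : ∀ (d : Fin D) (k : Fin (C'+1) → ℕ), k ∈ (a d).support →
      ∀ c, k c < K := by
    intro d k hk c
    have h1 : k c ≤ Finset.univ.sup k := Finset.le_sup (Finset.mem_univ c)
    have h2 : Finset.univ.sup k ≤ (a d).support.sup (fun k => Finset.univ.sup k) :=
      Finset.le_sup (f := fun k => Finset.univ.sup k) hk
    have h3 : (a d).support.sup (fun k => Finset.univ.sup k) ≤ N :=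
      Finset.le_sup (f := fun d : Fin D =>
        (a d).support.sup (fun k => Finset.univ.sup k)) (Finset.mem_univ d)
    have h4 : N + 1 ≤ K := le_max_right _ _
    omega
  -- the grid coefficients
  set T : Fin D → (Fin (C'+1) → Fin K) → ℝ := fun d κ => a d (fun c => (κ c : ℕ)) with hT
  -- the grid sums represent the y d
  have hgrid : ∀ (d : Fin D) (x : Fin (C'+1) → ℝ),
      ∑ κ : Fin (C'+1) → Fin K, T d κ * ∏ c, φ ((κ c : ℕ)) (x c)
        = ∑ k ∈ (a d).support, a d k * ∏ c, φ (k c) (x c) := by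
    intro d x
    set emb : (Fin (C'+1) → Fin K) → (Fin (C'+1) → ℕ) := fun κ c => (κ c : ℕ) with hemb'
    set G : (Fin (C'+1) → ℕ) → ℝ := fun k => a d k * ∏ c, φ (k c) (x c) with hG
    have hemb : ∀ p ∈ Finset.univ, ∀ q ∈ Finset.univ, emb p = emb q → p = q := by
      intro p _ q _ h
      funext c
      exact Fin.ext (congrFun h c)
    calc ∑ κ : Fin (C'+1) → Fin K, T d κ * ∏ c, φ ((κ c : ℕ)) (x c)
        = ∑ κ : Fin (C'+1) → Fin K, G (emb κ) := rfl
      _ = ∑ k ∈ Finset.univ.image emb, G k := (Finset.sum_image hemb).symm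
      _ = ∑ k ∈ (a d).support, G k := by
          refine (Finset.sum_subset ?_ ?_).symm
          · intro k hk
            refine Finset.mem_image.2 ⟨fun c => ⟨k c, hbound d k hk c⟩, Finset.mem_univ _, ?_⟩
            funext c
            rfl
          · intro k _ hk
            rw [hG]
            simp only []
            rw [Finsupp.notMem_support_iff.1 hk, zero_mul]
  -- build U and V
  obtain ⟨U, V, hUV⟩ := Futon.futon_construct φ T
  refine ⟨K, K ^ C' * D, ?_, U, V, ?_⟩
  · have : min K D = D := min_eq_right hKD
    rw [this]
    simp
  · intro d
    -- identify the FUTON sum with the grid sum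
    have hfun : ∀ x : Fin (C'+1) → ℝ,
        (∑ r : Fin (K ^ C' * D), V d r * ∏ c, (∑ k : Fin K, U c k r * φ (↑k) (x c)))
          = ∑ k ∈ (a d).support, a d k * ∏ c, φ (k c) (x c) := fun x => by
      rw [hUV d x, hgrid d x]
    -- the grid sum is a.e. equal to y d
    have hyae : ⇑(y d) =ᵐ[volume.restrict (Set.Icc (0 : Fin (C'+1) → ℝ) 1)]
        fun x => ∑ k ∈ (a d).support, a d k * ∏ c, φ (k c) (x c) := by
      rw [← ha d, Finsupp.sum]
      exact Futon.coeFn_toLp_sum_smul _ _ _ _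
    have hsae : (fun x : Fin (C'+1) → ℝ =>
        s d x - ∑ r : Fin (K ^ C' * D), V d r * ∏ c, (∑ k : Fin K, U c k r * φ (↑k) (x c)))
        =ᵐ[volume.restrict (Set.Icc (0 : Fin (C'+1) → ℝ) 1)]
        (⇑(MemLp.toLp (s d) (hs d)) - ⇑(y d)) := by
      filter_upwards [MemLp.coeFn_toLp (hs d), hyae] with x hx1 hx2
      rw [hfun x, Pi.sub_apply, hx1, hx2]
    rw [eLpNorm_congr_ae hsae, ← MeasureTheory.Lp.edist_def, edist_dist]
    exact (ENNReal.ofReal_lt_ofReal_iff hε).2 (hydist d)
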